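/- Let b_n be the number of compositions of n having mex 2, i.e., compositions with at least one part equal to 1 and no part equal to 2. Then in ℤ⟦X⟧ one has (1 − 2X + X^2 − X^3)(1 − X − X^3) · Σ_{n≥0} b_n X^n = X(1 − X)^2. -/

import Mathlib

open PowerSeries Finset

lemma head_add_tail_sum (l : List ℕ) (h : l ≠ []) : l.head h + l.tail.sum = l.sum := by
  cases l with
  | nil => exact absurd rfl h
  | cons a t => simp

section Aux

variable (P : ℕ → Prop) [DecidablePred P]

/-- number of compositions of `n` all of whose parts satisfy `P` -/
noncomputable def cntP (n : ℕ) : ℕ := Nat.card {c : Composition n // ∀ i ∈ c.blocks, P i}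

def headTailEquiv (n : ℕ) :
    {c : Composition (n+1) // ∀ i ∈ c.blocks, P i} ≃
      Σ j : {j : Fin (n+1) // P (n+1-(j:ℕ))},
        {c : Composition (j:ℕ) // ∀ i ∈ c.blocks, P i} where
  toFun := fun ⟨c, h⟩ =>
    have hne : c.blocks ≠ [] := fun hb => by simpa [hb] using c.blocks_sum
    have hhead : c.blocks.head hne ∈ c.blocks := List.head_mem hne
    have hsum : c.blocks.head hne + c.blocks.tail.sum = n+1 := by
      have hs := c.blocks_sum
      have := head_add_tail_sum c.blocks hne
      omega
    have hpos : 0 < c.blocks.head hne := c.blocks_pos hhead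
    ⟨⟨⟨c.blocks.tail.sum, by omega⟩, by
        have : n + 1 - c.blocks.tail.sum = c.blocks.head hne := by omega
        rw [this]; exact h _ hhead⟩,
      ⟨⟨c.blocks.tail, fun hi => c.blocks_pos (List.mem_of_mem_tail hi), rfl⟩,
        fun i hi => h i (List.mem_of_mem_tail hi)⟩⟩
  invFun := fun ⟨⟨j, hPj⟩, ⟨c, h⟩⟩ =>
    ⟨⟨(n+1-(j:ℕ)) :: c.blocks,
      fun hi => by
        rcases List.mem_cons.mp hi with h1 | h2
        · have := j.isLt; omega
        · exact c.blocks_pos h2,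
      by
        have := j.isLt
        simp only [List.sum_cons, c.blocks_sum]
        omega⟩,
      fun i hi => by
        rcases List.mem_cons.mp hi with h1 | h2
        · exact h1 ▸ hPj
        · exact h i h2⟩
  left_inv := fun ⟨c, h⟩ => by
    apply Subtype.ext
    apply Composition.ext
    have hne : c.blocks ≠ [] := fun hb => by simpa [hb] using c.blocks_sum
    have hhead : c.blocks.head hne ∈ c.blocks := List.head_mem hne
    have hpos : 0 < c.blocks.head hne := c.blocks_pos hhead
    have hsum : c.blocks.head hne + c.blocks.tail.sum = n+1 := by
      have hs := c.blocks_sum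
      have := head_add_tail_sum c.blocks hne
      omega
    show (n+1 - c.blocks.tail.sum) :: c.blocks.tail = c.blocks
    have : n + 1 - c.blocks.tail.sum = c.blocks.head hne := by omega
    rw [this, List.cons_head_tail]
  right_inv := fun ⟨⟨j, hPj⟩, ⟨c, h⟩⟩ => by
    rcases j with ⟨jv, hjv⟩
    rcases c with ⟨bl, hpos, hsum⟩
    simp only [] at hsum
    subst hsum
    rfl

lemma cntP_zero : cntP P 0 = 1 := by
  have h : ∀ c : Composition 0, ∀ i ∈ c.blocks, P i := by
    intro c i hi
    have h0 : c.blocks = [] := by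
      by_contra hne
      have hhead : c.blocks.head hne ∈ c.blocks := List.head_mem hne
      have := c.blocks_pos hhead
      have hs := c.blocks_sum
      have : c.blocks.head hne ≤ c.blocks.sum := List.single_le_sum (fun x hx => Nat.le_of_lt (c.blocks_pos hx)) _ hhead
      omega
    rw [h0] at hi; simp at hi
  rw [cntP, Nat.card_congr (Equiv.subtypeUnivEquiv h), Nat.card_eq_fintype_card, composition_card]
  norm_num

lemma cntP_succ (n : ℕ) :
    cntP P (n+1) = ∑ j ∈ Finset.range (n+1), if P (n+1-j) then cntP P j else 0 := by
  rw [cntP, Nat.card_eq_fintype_card, Fintype.card_congr (headTailEquiv P n),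
    Fintype.card_sigma]
  have e1 : ∀ x : {j : Fin (n+1) // P (n+1-(j:ℕ))},
      Fintype.card {c : Composition ((x:Fin (n+1)):ℕ) // ∀ i ∈ c.blocks, P i}
        = cntP P ((x:Fin (n+1)):ℕ) := by
    intro x; rw [cntP, Nat.card_eq_fintype_card]
  refine Eq.trans (Finset.sum_congr rfl fun x _ => e1 x) ?_
  have e2 : (∑ x : {j : Fin (n+1) // P (n+1-(j:ℕ))}, cntP P ((x : Fin (n+1)):ℕ))
      = ∑ j ∈ Finset.univ.filter (fun j : Fin (n+1) => P (n+1-(j:ℕ))), cntP P (j:ℕ) :=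
    (Finset.sum_subtype (p := fun j : Fin (n+1) => P (n+1-(j:ℕ)))
      (Finset.univ.filter (fun j : Fin (n+1) => P (n+1-(j:ℕ))))
      (fun x => by simp) (fun j : Fin (n+1) => cntP P (j:ℕ))).symm
  rw [e2]
  simp only [Finset.sum_filter]
  exact Fin.sum_univ_eq_sum_range (fun j => if P (n+1-j) then cntP P j else 0) (n+1)

end Aux

noncomputable def aF (n : ℕ) : ℕ := cntP (fun k => k ≠ 2) n
noncomputable def cF (n : ℕ) : ℕ := cntP (fun k => k ≠ 1 ∧ k ≠ 2) n

lemma aF_zero : aF 0 = 1 := cntP_zero _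
lemma cF_zero : cF 0 = 1 := cntP_zero _

lemma aF_one : aF 1 = 1 := by
  rw [aF, cntP_succ]
  simp [cntP_zero]

lemma aF_two : aF 2 = 1 := by
  have h := cntP_succ (fun k => k ≠ 2) 1
  rw [Finset.sum_range_succ, Finset.sum_range_one] at h
  norm_num at h
  have h' : aF 2 = aF 1 := h
  rw [h', aF_one]

lemma cF_one : cF 1 = 0 := by
  rw [cF, cntP_succ]; simp

lemma cF_two : cF 2 = 0 := by
  have h := cntP_succ (fun k => k ≠ 1 ∧ k ≠ 2) 1
  rw [Finset.sum_range_succ, Finset.sum_range_one] at h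
  norm_num at h
  exact h

lemma aF_rec2 (n : ℕ) : aF (n+2) = aF (n+1) + ∑ j ∈ Finset.range n, aF j := by
  have h := cntP_succ (fun k => k ≠ 2) (n+1)
  rw [Finset.sum_range_succ, Finset.sum_range_succ] at h
  have e1 : n + 1 + 1 - (n+1) = 1 := by omega
  have e2 : n + 1 + 1 - n = 2 := by omega
  rw [e1, e2] at h
  have h3 : ∀ j ∈ Finset.range n,
      (if (n+1+1-j) ≠ 2 then cntP (fun k => k ≠ 2) j else 0) = cntP (fun k => k ≠ 2) j := by
    intro j hj
    rw [Finset.mem_range] at hj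
    exact if_pos (by omega)
  rw [Finset.sum_congr rfl h3] at h
  norm_num at h
  have h' : aF (n+2) = (∑ j ∈ Finset.range n, aF j) + aF (n+1) := h
  omega

lemma aF_rec (n : ℕ) : aF (n+3) + aF (n+1) = 2 * aF (n+2) + aF n := by
  have h1 := aF_rec2 (n+1)
  have h2 := aF_rec2 n
  rw [Finset.sum_range_succ] at h1
  have h1' : aF (n+3) = aF (n+2) + ((∑ j ∈ Finset.range n, aF j) + aF n) := h1
  omega

lemma cF_rec2 (n : ℕ) : cF (n+2) = ∑ j ∈ Finset.range n, cF j := by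
  have h := cntP_succ (fun k => k ≠ 1 ∧ k ≠ 2) (n+1)
  rw [Finset.sum_range_succ, Finset.sum_range_succ] at h
  have e1 : n + 1 + 1 - (n+1) = 1 := by omega
  have e2 : n + 1 + 1 - n = 2 := by omega
  rw [e1, e2] at h
  have h3 : ∀ j ∈ Finset.range n,
      (if ((n+1+1-j) ≠ 1 ∧ (n+1+1-j) ≠ 2) then cntP (fun k => k ≠ 1 ∧ k ≠ 2) j else 0)
        = cntP (fun k => k ≠ 1 ∧ k ≠ 2) j := by
    intro j hj
    rw [Finset.mem_range] at hj
    exact if_pos (by omega)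
  rw [Finset.sum_congr rfl h3] at h
  norm_num at h
  have h' : cF (n+2) = ∑ j ∈ Finset.range n, cF j := h
  omega

lemma cF_rec (n : ℕ) : cF (n+3) = cF (n+2) + cF n := by
  have h1 := cF_rec2 (n+1)
  have h2 := cF_rec2 n
  rw [Finset.sum_range_succ] at h1
  have h1' : cF (n+3) = (∑ j ∈ Finset.range n, cF j) + cF n := h1
  omega

noncomputable def mkA : PowerSeries ℤ := PowerSeries.mk fun n => (aF n : ℤ)
noncomputable def mkC : PowerSeries ℤ := PowerSeries.mk fun n => (cF n : ℤ)

lemma gf_a : (1 - 2*(X : PowerSeries ℤ) + X^2 - X^3) * mkA = 1 - X := by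
  have expand : (1 - 2*(X : PowerSeries ℤ) + X^2 - X^3) * mkA
      = mkA - (X^1*mkA + X^1*mkA) + X^2*mkA - X^3*mkA := by ring
  ext n
  rw [expand]
  simp only [mkA, map_sub, map_add, coeff_X_pow_mul', coeff_mk, coeff_one, coeff_X]
  match n with
  | 0 => norm_num [aF_zero]
  | 1 => norm_num [aF_one, aF_zero]
  | 2 => norm_num [aF_two, aF_one, aF_zero]
  | (k+3) =>
    rw [if_pos (show 1 ≤ k+3 by omega), if_pos (show 2 ≤ k+3 by omega),
      if_pos (show 3 ≤ k+3 by omega)]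
    have e1 : k+3-1 = k+2 := by omega
    have e2 : k+3-2 = k+1 := by omega
    have e3 : k+3-3 = k := by omega
    rw [e1, e2, e3]
    have h : (aF (k+3) : ℤ) + aF (k+1) = 2 * aF (k+2) + aF k := by
      exact_mod_cast aF_rec k
    rw [if_neg (show ¬(k+3=0) by omega), if_neg (show ¬(k+3=1) by omega)]
    push_cast
    linarith

lemma gf_c : (1 - (X : PowerSeries ℤ) - X^3) * mkC = 1 - X := by
  have expand : (1 - (X : PowerSeries ℤ) - X^3) * mkC
      = mkC - X^1*mkC - X^3*mkC := by ring
  ext n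
  rw [expand]
  simp only [mkC, map_sub, coeff_X_pow_mul', coeff_mk, coeff_one, coeff_X]
  match n with
  | 0 => norm_num [cF_zero]
  | 1 => norm_num [cF_one, cF_zero]
  | 2 => norm_num [cF_two, cF_one]
  | (k+3) =>
    rw [if_pos (show 1 ≤ k+3 by omega), if_pos (show 3 ≤ k+3 by omega)]
    have e1 : k+3-1 = k+2 := by omega
    have e3 : k+3-3 = k := by omega
    rw [e1, e3]
    have h : (cF (k+3) : ℤ) = cF (k+2) + cF k := by exact_mod_cast cF_rec k
    rw [if_neg (show ¬(k+3=0) by omega), if_neg (show ¬(k+3=1) by omega)]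
    push_cast
    linarith

lemma split (n : ℕ) :
    Nat.card {c : Composition n // 1 ∈ c.blocks ∧ 2 ∉ c.blocks} + cF n = aF n := by
  have ea : aF n = Nat.card {c : Composition n // 2 ∉ c.blocks} := by
    rw [aF, cntP]
    exact Nat.card_congr (Equiv.subtypeEquivRight (fun c => by
      constructor
      · intro h hm; exact h 2 hm rfl
      · intro h i hi he; exact h (he ▸ hi)))
  have ec : cF n = Nat.card {c : Composition n // 1 ∉ c.blocks ∧ 2 ∉ c.blocks} := by
    rw [cF, cntP]
    exact Nat.card_congr (Equiv.subtypeEquivRight (fun c => by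
      constructor
      · intro h; exact ⟨fun hm => (h 1 hm).1 rfl, fun hm => (h 2 hm).2 rfl⟩
      · intro h i hi; exact ⟨fun he => h.1 (he ▸ hi), fun he => h.2 (he ▸ hi)⟩))
  rw [ea, ec,
    Nat.card_eq_fintype_card, Nat.card_eq_fintype_card, Nat.card_eq_fintype_card,
    Fintype.card_subtype, Fintype.card_subtype, Fintype.card_subtype,
    ← Finset.card_filter_add_card_filter_not
      (s := Finset.univ.filter fun c : Composition n => 2 ∉ c.blocks)
      (p := fun c => 1 ∈ c.blocks)]
  congr 1
  · rw [Finset.filter_filter]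
    refine congrArg Finset.card ?_
    apply Finset.filter_congr
    intro x _
    constructor <;> (intro h; tauto)
  · rw [Finset.filter_filter]
    refine congrArg Finset.card ?_
    apply Finset.filter_congr
    intro x _
    constructor <;> (intro h; tauto)

/-- if `b n` is the number of compositions of `n` with mex 2 (at least one
part equal to 1 and no part equal to 2), then
`(1 − 2X + X² − X³)(1 − X − X³) · Σ bₙ Xⁿ = X(1 − X)²` in `ℤ⟦X⟧`. -/
theorem stmt_6 :
    (1 - 2 * (X : PowerSeries ℤ) + X ^ 2 - X ^ 3) * (1 - X - X ^ 3) *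
        PowerSeries.mk
          (fun n => (Nat.card {c : Composition n // 1 ∈ c.blocks ∧ 2 ∉ c.blocks} : ℤ)) =
      X * (1 - X) ^ 2 := by
  have hmk : PowerSeries.mk
      (fun n => (Nat.card {c : Composition n // 1 ∈ c.blocks ∧ 2 ∉ c.blocks} : ℤ))
      = mkA - mkC := by
    ext n
    simp only [map_sub, coeff_mk, mkA, mkC]
    have := split n
    omega
  rw [hmk]
  have h1 := gf_a
  have h2 := gf_c
  linear_combination (1 - (X : PowerSeries ℤ) - X^3) * h1 - (1 - 2*X + X^2 - X^3) * h2
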